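/- Let (Ω, P) be a probability space, k̃ : [0,∞) → [0,∞) nondecreasing, and suppose under the null the statistic has super-uniform p-values. Formally: let P_I and P* be [0,1]-valued random variables such that (i) under the null measure Q, Pr_Q(P* ≤ α) ≤ α for all α, (ii) the alternative measure has density k̃(|φ|) with respect to Q where φ is the test statistic, and (iii) {P_I ≤ α} = {|φ| ≥ c_α} with Pr_Q(|φ| ≥ c_α) = α. Then under the alternative, Pr(P_I ≤ α) ≥ Pr(P* ≤ α) for all α ∈ [0,1]. -/

import Mathlib

open MeasureTheory Set

/-- Theorem 1 of the paper: the ideal post-selection p-value, whose rejection regions are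
tail sets in `|φ|` of exact null level, dominates any valid p-value in power against
alternatives with monotone likelihood ratio `k̃(|φ|)` with respect to the null. -/
theorem stmt3 {Ω : Type*} [MeasurableSpace Ω] (Q : Measure Ω) [IsProbabilityMeasure Q]
    (φ : Ω → ℝ) (hφ : Measurable φ)
    (ktil : ℝ → ℝ) (hk_nonneg : ∀ x, 0 ≤ x → 0 ≤ ktil x)
    (hk_mono : MonotoneOn ktil (Set.Ici 0))
    (μ : Measure Ω)
    (hμ : μ = Q.withDensity fun ω => ENNReal.ofReal (ktil |φ ω|))
    [IsProbabilityMeasure μ]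
    (PI Pstar : Ω → ℝ) (hPstar_meas : Measurable Pstar)
    (hPstar : ∀ α ∈ Set.Icc (0:ℝ) 1, Q {ω | Pstar ω ≤ α} ≤ ENNReal.ofReal α)
    (c : ℝ → ℝ)
    (hPI : ∀ α ∈ Set.Icc (0:ℝ) 1,
      {ω | PI ω ≤ α} = {ω | c α ≤ |φ ω|} ∧ Q {ω | c α ≤ |φ ω|} = ENNReal.ofReal α) :
    ∀ α ∈ Set.Icc (0:ℝ) 1, μ {ω | Pstar ω ≤ α} ≤ μ {ω | PI ω ≤ α} := by
  intro α hα
  obtain ⟨hset, hlevel⟩ := hPI α hα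
  rw [hset]
  set A := {ω | Pstar ω ≤ α} with hA
  set B := {ω | c α ≤ |φ ω|} with hB
  have hAmeas : MeasurableSet A := measurableSet_le hPstar_meas measurable_const
  have hBmeas : MeasurableSet B := measurableSet_le measurable_const hφ.abs
  by_cases hc : 0 ≤ c α
  · have hQ : Q A ≤ Q B := by rw [hlevel]; exact hPstar α hα
    have hQdiff : Q (A \ B) ≤ Q (B \ A) := by
      have h1 := measure_inter_add_diff (μ := Q) A hBmeas
      have h2 := measure_inter_add_diff (μ := Q) B hAmeas
      rw [Set.inter_comm] at h2
      have hle : Q (A ∩ B) + Q (A \ B) ≤ Q (A ∩ B) + Q (B \ A) := by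
        rw [h1, h2]; exact hQ
      exact (ENNReal.add_le_add_iff_left (measure_ne_top Q _)).mp hle
    have hf : ∀ s, MeasurableSet s →
        μ s = ∫⁻ ω in s, ENNReal.ofReal (ktil |φ ω|) ∂Q := by
      intro s hs; rw [hμ, withDensity_apply _ hs]
    set K := ENNReal.ofReal (ktil (c α)) with hK
    have hupper : μ (A \ B) ≤ K * Q (A \ B) := by
      rw [hf _ (hAmeas.diff hBmeas)]
      calc ∫⁻ ω in A \ B, ENNReal.ofReal (ktil |φ ω|) ∂Q
          ≤ ∫⁻ _ in A \ B, K ∂Q := by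
            apply setLIntegral_mono' (hAmeas.diff hBmeas)
            intro ω hω
            have hlt : |φ ω| < c α := not_le.mp hω.2
            exact ENNReal.ofReal_le_ofReal
              (hk_mono (Set.mem_Ici.mpr (abs_nonneg _)) (Set.mem_Ici.mpr hc) hlt.le)
        _ = K * Q (A \ B) := by rw [setLIntegral_const]
    have hlower : K * Q (B \ A) ≤ μ (B \ A) := by
      rw [hf _ (hBmeas.diff hAmeas)]
      calc K * Q (B \ A) = ∫⁻ _ in B \ A, K ∂Q := (setLIntegral_const _ _).symm
        _ ≤ ∫⁻ ω in B \ A, ENNReal.ofReal (ktil |φ ω|) ∂Q := by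
            apply setLIntegral_mono' (hBmeas.diff hAmeas)
            intro ω hω
            have hge : c α ≤ |φ ω| := hω.1
            exact ENNReal.ofReal_le_ofReal
              (hk_mono (Set.mem_Ici.mpr hc) (Set.mem_Ici.mpr (hc.trans hge)) hge)
    have key : μ (A \ B) ≤ μ (B \ A) :=
      hupper.trans ((mul_le_mul_right hQdiff K).trans hlower)
    calc μ A = μ (A ∩ B) + μ (A \ B) := (measure_inter_add_diff A hBmeas).symm
      _ ≤ μ (A ∩ B) + μ (B \ A) := add_le_add_right key _
      _ = μ (B ∩ A) + μ (B \ A) := by rw [Set.inter_comm]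
      _ = μ B := measure_inter_add_diff B hAmeas
  · have hBuniv : B = Set.univ :=
      Set.eq_univ_of_forall fun ω => le_trans (not_le.mp hc).le (abs_nonneg _)
    rw [hBuniv]
    exact measure_mono (Set.subset_univ _)
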